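/- arXiv:2409.13074 — 4 statements merged into one kernel-verified Lean document; each statement's English description precedes it below -/
import Mathlib

section
/- For the ODE x'(s) = (w+1) - w·tanh(s·x(s)) on [0,1] with w ≥ 0 and initial condition x(0) ≥ -√(w+1)/2, the solution satisfies x(1) ≥ √(w+1)/4. -/
set_option maxHeartbeats 800000

open Real Set

/-- Monotonicity helper: if `f` has nonnegative derivative `f'` on `[u,v]`, then `f u ≤ f v`. -/
lemma aux_mono {f f' : ℝ → ℝ} {u v : ℝ} (huv : u ≤ v)
    (hd : ∀ s ∈ Set.Icc u v, HasDerivAt f (f' s) s)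
    (h0 : ∀ s ∈ Set.Icc u v, 0 ≤ f' s) : f u ≤ f v := by
  have hmono : MonotoneOn f (Set.Icc u v) := by
    apply monotoneOn_of_deriv_nonneg (convex_Icc u v)
    · exact fun s hs => (hd s hs).continuousAt.continuousWithinAt
    · intro s hs
      rw [interior_Icc] at hs
      exact (hd s (Ioo_subset_Icc_self hs)).differentiableAt.differentiableWithinAt
    · intro s hs
      rw [interior_Icc] at hs
      rw [(hd s (Ioo_subset_Icc_self hs)).deriv]
      exact h0 s (Ioo_subset_Icc_self hs)
  exact hmono (Set.left_mem_Icc.2 huv) (Set.right_mem_Icc.2 huv) huv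

lemma aux_tanh_le_one (u : ℝ) : Real.tanh u ≤ 1 := by
  rw [Real.tanh_eq_sinh_div_cosh, div_le_one (Real.cosh_pos u)]
  rw [Real.sinh_eq, Real.cosh_eq]
  have := Real.exp_pos (-u)
  linarith

lemma aux_tanh_nonneg {u : ℝ} (hu : 0 ≤ u) : 0 ≤ Real.tanh u := by
  rw [Real.tanh_eq_sinh_div_cosh]
  exact div_nonneg (Real.sinh_nonneg_iff.2 hu) (Real.cosh_pos u).le

lemma aux_tanh_nonpos {u : ℝ} (hu : u ≤ 0) : Real.tanh u ≤ 0 := by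
  rw [Real.tanh_eq_sinh_div_cosh]
  exact div_nonpos_of_nonpos_of_nonneg (Real.sinh_nonpos_iff.2 hu) (Real.cosh_pos u).le

lemma aux_tanh_le_self {u : ℝ} (hu : 0 ≤ u) : Real.tanh u ≤ u := by
  -- show sinh u ≤ u * cosh u via monotonicity of g t = t * cosh t - sinh t on [0,u]
  have key : Real.sinh u ≤ u * Real.cosh u := by
    have h := aux_mono (f := fun t => t * Real.cosh t - Real.sinh t)
      (f' := fun t => t * Real.sinh t) hu
      (fun s _ => by
        exact (((hasDerivAt_id' s).mul (Real.hasDerivAt_cosh s)).sub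
          (Real.hasDerivAt_sinh s)).congr_deriv (by ring))
      (fun s hs => mul_nonneg hs.1 (Real.sinh_nonneg_iff.2 hs.1))
    simpa [Real.sinh_zero, Real.cosh_zero] using h
  rw [Real.tanh_eq_sinh_div_cosh, div_le_iff₀ (Real.cosh_pos u)]
  exact key

/-- For the guided probability flow ODE `x'(s) = (w+1) - w·tanh(s·x(s))` on `[0,1]`
with `w ≥ 0` and initial condition `x(0) ≥ -√(w+1)/2`, one has `x(1) ≥ √(w+1)/4`. -/
theorem stmt_0 (w : ℝ) (hw : 0 ≤ w) (x : ℝ → ℝ)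
    (hode : ∀ s ∈ Set.Icc (0 : ℝ) 1,
      HasDerivAt x ((w + 1) - w * Real.tanh (s * x s)) s)
    (hinit : x 0 ≥ -Real.sqrt (w + 1) / 2) :
    x 1 ≥ Real.sqrt (w + 1) / 4 := by
  have hw1 : (0:ℝ) < w + 1 := by linarith
  obtain ⟨a, ha_def⟩ : ∃ a : ℝ, a = Real.sqrt (w + 1) := ⟨_, rfl⟩
  rw [← ha_def] at hinit ⊢
  have ha2 : a ^ 2 = w + 1 := by rw [ha_def]; exact Real.sq_sqrt hw1.le
  have ha1 : 1 ≤ a := by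
    nlinarith [Real.sqrt_nonneg (w+1)]
  have ha0 : 0 < a := by linarith
  -- x is "monotone plus slope 1": for u ≤ v in [0,1], x u + (v - u) ≤ x v
  have hmono : ∀ u v : ℝ, 0 ≤ u → u ≤ v → v ≤ 1 → x u + (v - u) ≤ x v := by
    intro u v hu huv hv1
    have h := aux_mono (f := fun s => x s - s)
      (f' := fun s => ((w + 1) - w * Real.tanh (s * x s)) - 1) huv
      (fun s hs => ((hode s ⟨le_trans hu hs.1, le_trans hs.2 hv1⟩).sub (hasDerivAt_id s)))
      (fun s hs => by
        have := aux_tanh_le_one (s * x s)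
        nlinarith)
    simp only [sub_le_sub_iff] at h
    linarith [h]
  -- case x 0 ≥ a / 4
  rcases le_or_gt (a / 4) (x 0) with hc | hc
  · have := hmono 0 1 le_rfl zero_le_one le_rfl
    linarith
  -- main case : obtain t₀ ∈ [0, 1/(2a)] with 0 ≤ x t₀ ≤ a/4
  have h2a : 1 / (2 * a) ≤ 1 / 2 := by
    rw [div_le_div_iff₀ (by linarith) (by norm_num)]
    linarith
  have h2a0 : 0 < 1 / (2 * a) := by positivity
  have hobt : ∃ t₀ ∈ Set.Icc (0:ℝ) (1 / (2 * a)), 0 ≤ x t₀ ∧ x t₀ ≤ a / 4 := by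
    rcases le_or_gt 0 (x 0) with h0 | h0
    · exact ⟨0, Set.left_mem_Icc.2 h2a0.le, h0, hc.le⟩
    · -- x 0 < 0 : show x (1/(2a)) ≥ 0, then IVT gives a zero of x
      have hcross : 0 ≤ x (1 / (2 * a)) := by
        by_contra hneg
        push_neg at hneg
        -- x stays negative on [0, 1/(2a)], so x' ≥ w + 1 there
        have h := aux_mono (f := fun s => x s - (w + 1) * s)
          (f' := fun s => ((w + 1) - w * Real.tanh (s * x s)) - (w + 1)) h2a0.le
          (fun s hs => ((hode s ⟨hs.1, le_trans hs.2 (by linarith)⟩).sub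
            (by simpa using (hasDerivAt_id s).const_mul (w+1))))
          (fun s hs => by
            have hxs : x s ≤ x (1 / (2 * a)) := by
              have := hmono s (1 / (2 * a)) hs.1 hs.2 (by linarith)
              linarith [hs.2, hs.1]
            have hsx : s * x s ≤ 0 := mul_nonpos_of_nonneg_of_nonpos hs.1 (by linarith)
            have := aux_tanh_nonpos hsx
            nlinarith)
        have : x 0 ≤ x (1 / (2 * a)) - (w + 1) * (1 / (2 * a)) := by linarith
        have heq : (w + 1) * (1 / (2 * a)) = a / 2 := by
          field_simp
          nlinarith
        rw [heq] at this
        have : -a/2 ≤ x 0 := by linarith [hinit]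
        linarith
      -- IVT
      have hcont : ContinuousOn x (Set.Icc 0 (1 / (2 * a))) := fun s hs =>
        (hode s ⟨hs.1, le_trans hs.2 (by linarith)⟩).continuousAt.continuousWithinAt
      have := intermediate_value_Icc h2a0.le hcont
      have hmem : (0:ℝ) ∈ Set.Icc (x 0) (x (1 / (2 * a))) := ⟨h0.le, hcross⟩
      obtain ⟨t₀, ht₀, hxt₀⟩ := this hmem
      refine ⟨t₀, ht₀, le_of_eq hxt₀.symm, by rw [hxt₀]; linarith⟩
  obtain ⟨t₀, ⟨ht₀0, ht₀u⟩, hxt₀0, hxt₀u⟩ := hobt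
  have hTa : 1 / a ≤ 1 := by
    rw [div_le_one ha0]; exact ha1
  have ht₀T : t₀ ≤ 1 / a := le_trans ht₀u (by
    rw [div_le_div_iff₀ (by linarith) ha0]; linarith)
  have ht₀1 : t₀ ≤ 1 := le_trans ht₀T hTa
  -- Step C: upper bound x s ≤ a/4 + (w+1)(s - t₀) on [t₀, 1/a]
  have hub : ∀ s ∈ Set.Icc t₀ (1 / a), x s ≤ a / 4 + (w + 1) * (s - t₀) := by
    intro s hs
    have h := aux_mono (f := fun s => a / 4 + (w + 1) * (s - t₀) - x s)
      (f' := fun s => (w + 1) - ((w + 1) - w * Real.tanh (s * x s))) hs.1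
      (fun r hr => by
        have hr' : r ∈ Set.Icc (0:ℝ) 1 :=
          ⟨le_trans ht₀0 hr.1, le_trans hr.2 (le_trans hs.2 hTa)⟩
        have : HasDerivAt (fun s => a / 4 + (w + 1) * (s - t₀)) (w + 1) r := by
          simpa using (((hasDerivAt_id r).sub_const t₀).const_mul (w+1)).const_add (a/4)
        exact this.sub (hode r hr'))
      (fun r hr => by
        have hr0 : 0 ≤ r := le_trans ht₀0 hr.1
        have hxr : 0 ≤ x r := by
          rcases eq_or_lt_of_le hr.1 with rfl | hlt
          · exact hxt₀0
          · have := hmono t₀ r ht₀0 hr.1 (le_trans hr.2 (le_trans hs.2 hTa))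
            linarith
        have := aux_tanh_nonneg (mul_nonneg hr0 hxr)
        nlinarith)
    have h0 : a / 4 + (w + 1) * (t₀ - t₀) - x t₀ = a / 4 - x t₀ := by ring_nf
    nlinarith [h, hxt₀u]
  -- Step D: lower bound via comparison with polynomial p
  set p : ℝ → ℝ := fun s => (w + 1) * (s - a / 8 * s ^ 2 - (w + 1) * (s ^ 3 / 3 - t₀ * s ^ 2 / 2))
    with hp_def
  have hpd : ∀ s : ℝ, HasDerivAt p
      ((w + 1) * (1 - a / 4 * s - (w + 1) * (s ^ 2 - t₀ * s))) s := by
    intro s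
    have : HasDerivAt (fun s : ℝ => s - a / 8 * s ^ 2 - (w + 1) * (s ^ 3 / 3 - t₀ * s ^ 2 / 2))
        (1 - a / 8 * (2 * s) - (w + 1) * (3 * s ^ 2 / 3 - t₀ * (2 * s) / 2)) s := by
      have h1 : HasDerivAt (fun s : ℝ => s) 1 s := hasDerivAt_id s
      have h2 : HasDerivAt (fun s : ℝ => a / 8 * s ^ 2) (a / 8 * (2 * s)) s := by
        simpa using ((hasDerivAt_pow 2 s).const_mul (a/8))
      have h3 : HasDerivAt (fun s : ℝ => (w + 1) * (s ^ 3 / 3 - t₀ * s ^ 2 / 2))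
          ((w + 1) * (3 * s ^ 2 / 3 - t₀ * (2 * s) / 2)) s := by
        have h3a : HasDerivAt (fun s : ℝ => s ^ 3 / 3) (3 * s ^ 2 / 3) s := by
          simpa using (hasDerivAt_pow 3 s).div_const 3
        have h3b : HasDerivAt (fun s : ℝ => t₀ * s ^ 2 / 2) (t₀ * (2 * s) / 2) s := by
          simpa [mul_div_assoc] using (((hasDerivAt_pow 2 s).const_mul t₀).div_const 2)
        exact (h3a.sub h3b).const_mul (w+1)
      exact (h1.sub h2).sub h3
    have := this.const_mul (w+1)
    exact this.congr_deriv (by ring)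
  have hlow := aux_mono (f := fun s => x s - p s)
    (f' := fun s => ((w + 1) - w * Real.tanh (s * x s)) -
      (w + 1) * (1 - a / 4 * s - (w + 1) * (s ^ 2 - t₀ * s))) ht₀T
    (fun s hs => (hode s ⟨le_trans ht₀0 hs.1, le_trans hs.2 hTa⟩).sub (hpd s))
    (fun s hs => by
      have hs0 : 0 ≤ s := le_trans ht₀0 hs.1
      have hxs0 : 0 ≤ x s := by
        rcases eq_or_lt_of_le hs.1 with rfl | hlt
        · exact hxt₀0
        · have := hmono t₀ s ht₀0 hs.1 (le_trans hs.2 hTa)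
          linarith
      have htle : Real.tanh (s * x s) ≤ s * x s := aux_tanh_le_self (mul_nonneg hs0 hxs0)
      have hub' := hub s hs
      -- w * tanh(s * x s) ≤ (w+1) * s * (a/4 + (w+1)(s - t₀))
      have h1 : w * Real.tanh (s * x s) ≤ (w + 1) * (s * x s) := by
        have ht0 : 0 ≤ Real.tanh (s * x s) := aux_tanh_nonneg (mul_nonneg hs0 hxs0)
        nlinarith [mul_nonneg hs0 hxs0]
      have h2 : (w + 1) * (s * x s) ≤ (w + 1) * (s * (a / 4 + (w + 1) * (s - t₀))) := by
        apply mul_le_mul_of_nonneg_left _ hw1.le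
        apply mul_le_mul_of_nonneg_left hub' hs0
      nlinarith [h1, h2])
  -- compute p (1/a) - p t₀ ≥ a/4 using a^2 = w + 1, 0 ≤ t₀ ≤ 1/(2a)
  have hdelta : p (1 / a) - p t₀ ≥ a / 4 := by
    have hpT : p (1 / a) = 13 / 24 * a + a ^ 2 * t₀ / 2 := by
      show (w + 1) * (1 / a - a / 8 * (1 / a) ^ 2 - (w + 1) * ((1 / a) ^ 3 / 3 - t₀ * (1 / a) ^ 2 / 2)) = 13 / 24 * a + a ^ 2 * t₀ / 2
      rw [← ha2]
      field_simp
      ring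
    have hpt : p t₀ = a ^ 2 * t₀ - a ^ 3 * t₀ ^ 2 / 8 + a ^ 4 * t₀ ^ 3 / 6 := by
      show (w + 1) * (t₀ - a / 8 * t₀ ^ 2 - (w + 1) * (t₀ ^ 3 / 3 - t₀ * t₀ ^ 2 / 2)) = a ^ 2 * t₀ - a ^ 3 * t₀ ^ 2 / 8 + a ^ 4 * t₀ ^ 3 / 6
      rw [← ha2]
      ring
    rw [hpT, hpt]
    -- let τ = a * t₀ ∈ [0, 1/2]
    have hτu : a * t₀ ≤ 1 / 2 := by
      calc a * t₀ ≤ a * (1 / (2 * a)) := mul_le_mul_of_nonneg_left ht₀u ha0.le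
        _ = 1 / 2 := by field_simp
    have hτ0 : 0 ≤ a * t₀ := mul_nonneg ha0.le ht₀0
    have hg : 7 / 24 - (a * t₀) / 2 + (a * t₀) ^ 2 / 8 - (a * t₀) ^ 3 / 6 ≥ 0 := by
      nlinarith [sq_nonneg (a * t₀), pow_le_pow_left₀ hτ0 hτu 3]
    nlinarith [mul_le_mul_of_nonneg_left hg ha0.le]
  -- combine: x (1/a) ≥ x t₀ + (p (1/a) - p t₀) ≥ a/4, then x 1 ≥ x (1/a)
  have hfin : x (1 / a) ≥ a / 4 := by
    have : x t₀ - p t₀ ≤ x (1 / a) - p (1 / a) := hlow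
    linarith
  have := hmono (1 / a) 1 (by positivity) hTa le_rfl
  linarith
end

section
/- For the ODE x'(s) = (w+1) - w·tanh(s·x(s)) on [0,1] with w ≥ 100 and initial condition x(0) > -2w + 26·ln(w), the solution satisfies x(1) ≥ 0. -/
open Real Set

private lemma myTanh_le_one (t : ℝ) : Real.tanh t ≤ 1 := by
  rw [Real.tanh_eq_sinh_div_cosh, div_le_one (Real.cosh_pos t)]
  rw [Real.sinh_eq, Real.cosh_eq]
  nlinarith [Real.exp_pos (-t)]

private lemma myTanh_nonpos {t : ℝ} (ht : t ≤ 0) : Real.tanh t ≤ 0 := by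
  rw [Real.tanh_eq_sinh_div_cosh]
  apply div_nonpos_of_nonpos_of_nonneg
  · rw [Real.sinh_eq]
    have : Real.exp t ≤ Real.exp (-t) := Real.exp_le_exp.mpr (by linarith)
    linarith
  · exact (Real.cosh_pos t).le

private lemma myTanh_key (t : ℝ) : Real.tanh t ≤ -1 + 2 * Real.exp (2 * t) := by
  rw [Real.tanh_eq_sinh_div_cosh, div_le_iff₀ (Real.cosh_pos t)]
  rw [Real.sinh_eq, Real.cosh_eq]
  have e1 : Real.exp (2 * t) * Real.exp t = Real.exp (3 * t) := by
    rw [← Real.exp_add]; ring_nf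
  have e2 : Real.exp (2 * t) * Real.exp (-t) = Real.exp t := by
    rw [← Real.exp_add]; ring_nf
  nlinarith [Real.exp_pos (3 * t), Real.exp_pos t, Real.exp_pos (-t)]

private lemma myMonoAux (f f' : ℝ → ℝ)
    (hf : ∀ s ∈ Set.Icc (0 : ℝ) 1, HasDerivAt f (f' s) s)
    (hpos : ∀ s ∈ Set.Icc (0 : ℝ) 1, 0 ≤ f' s) :
    MonotoneOn f (Set.Icc (0 : ℝ) 1) := by
  apply monotoneOn_of_deriv_nonneg (convex_Icc 0 1)
  · exact fun s hs => ((hf s hs).continuousAt).continuousWithinAt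
  · intro s hs
    rw [interior_Icc] at hs
    exact ((hf s (Set.Ioo_subset_Icc_self hs)).differentiableAt).differentiableWithinAt
  · intro s hs
    rw [interior_Icc] at hs
    rw [(hf s (Set.Ioo_subset_Icc_self hs)).deriv]
    exact hpos s (Set.Ioo_subset_Icc_self hs)

/-- For the guided probability flow ODE `x'(s) = (w+1) - w·tanh(s·x(s))` on `[0,1]`
with `w ≥ 100` and initial condition `x(0) > -2w + 26·ln(w)`, one has `x(1) ≥ 0`. -/
theorem stmt_1 (w : ℝ) (hw : 100 ≤ w) (x : ℝ → ℝ)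
    (hode : ∀ s ∈ Set.Icc (0 : ℝ) 1,
      HasDerivAt x ((w + 1) - w * Real.tanh (s * x s)) s)
    (hinit : x 0 > -2 * w + 26 * Real.log w) :
    x 1 ≥ 0 := by
  by_contra hcon
  push_neg at hcon
  have hw0 : (0 : ℝ) < w := by linarith
  have hw1 : (0 : ℝ) < w + 1 := by linarith
  have h01 : (0 : ℝ) ∈ Set.Icc (0 : ℝ) 1 := by constructor <;> norm_num
  have h11 : (1 : ℝ) ∈ Set.Icc (0 : ℝ) 1 := by constructor <;> norm_num
  -- x is monotone on [0,1] since x' ≥ 1 > 0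
  have hmono : MonotoneOn x (Set.Icc (0 : ℝ) 1) := by
    apply myMonoAux x (fun s => (w + 1) - w * Real.tanh (s * x s)) hode
    intro s hs
    nlinarith [myTanh_le_one (s * x s)]
  -- x s < 0 on [0,1]
  have hneg : ∀ s ∈ Set.Icc (0 : ℝ) 1, x s < 0 := fun s hs =>
    lt_of_le_of_lt (hmono hs h11 hs.2) hcon
  -- therefore x' ≥ w + 1, so x s ≤ x 1 - (w+1)(1-s)
  have hC : MonotoneOn (fun s => x s - (w + 1) * s) (Set.Icc (0 : ℝ) 1) := by
    apply myMonoAux _ (fun s => ((w + 1) - w * Real.tanh (s * x s)) - (w + 1))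
    · intro s hs
      have hlin : HasDerivAt (fun s : ℝ => (w + 1) * s) (w + 1) s := by
        simpa using (hasDerivAt_id s).const_mul (w + 1)
      exact (hode s hs).sub hlin
    · intro s hs
      have ht : s * x s ≤ 0 := mul_nonpos_of_nonneg_of_nonpos hs.1 (hneg s hs).le
      have := myTanh_nonpos ht
      nlinarith
  have hXub : ∀ s ∈ Set.Icc (0 : ℝ) 1, x s ≤ -(w + 1) * (1 - s) := by
    intro s hs
    have := hC hs h11 hs.2
    simp only at this
    nlinarith [hcon]
  -- the auxiliary comparison function
  set G : ℝ → ℝ := fun s => (2 * w + 1) * s + (2 * w / (w + 1)) * Real.exp (-(w + 1) * s)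
      - (2 * w / (w + 1)) * Real.exp ((w + 1) * s - (w + 1)) with hGdef
  have hG : ∀ s : ℝ, HasDerivAt G
      ((2 * w + 1) - 2 * w * Real.exp (-(w + 1) * s) - 2 * w * Real.exp ((w + 1) * s - (w + 1))) s := by
    intro s
    have h1 : HasDerivAt (fun s : ℝ => -(w + 1) * s) (-(w + 1)) s := by
      simpa using (hasDerivAt_id s).const_mul (-(w + 1))
    have h2 : HasDerivAt (fun s : ℝ => (w + 1) * s - (w + 1)) (w + 1) s := by
      simpa using ((hasDerivAt_id s).const_mul (w + 1)).sub_const (w + 1)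
    have hlin : HasDerivAt (fun s : ℝ => (2 * w + 1) * s) (2 * w + 1) s := by
      simpa using (hasDerivAt_id s).const_mul (2 * w + 1)
    have hA := (h1.exp).const_mul (2 * w / (w + 1))
    have hB := (h2.exp).const_mul (2 * w / (w + 1))
    have := (hlin.add hA).sub hB
    refine this.congr_deriv ?_
    field_simp
    ring
  -- pointwise derivative comparison
  have hDer : ∀ s ∈ Set.Icc (0 : ℝ) 1,
      0 ≤ ((w + 1) - w * Real.tanh (s * x s))
        - ((2 * w + 1) - 2 * w * Real.exp (-(w + 1) * s) - 2 * w * Real.exp ((w + 1) * s - (w + 1))) := by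
    intro s hs
    have hxs := hXub s hs
    have hu : 2 * (s * x s) ≤ -2 * (w + 1) * s * (1 - s) := by nlinarith [hs.1]
    have hexp : Real.exp (2 * (s * x s)) ≤
        Real.exp (-(w + 1) * s) + Real.exp ((w + 1) * s - (w + 1)) := by
      rcases le_or_gt s (1/2) with h | h
      · have : 2 * (s * x s) ≤ -(w + 1) * s := by
          nlinarith [mul_nonneg (mul_nonneg hw1.le hs.1) (by linarith [hs.1, hs.2] : (0:ℝ) ≤ 1 - 2 * s)]
        have h3 := Real.exp_le_exp.mpr this
        nlinarith [Real.exp_pos ((w + 1) * s - (w + 1))]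
      · have : 2 * (s * x s) ≤ (w + 1) * s - (w + 1) := by
          nlinarith [mul_nonneg (mul_nonneg hw1.le (by linarith [hs.1, hs.2] : (0:ℝ) ≤ 1 - s)) (by linarith [hs.1, hs.2] : (0:ℝ) ≤ 2 * s - 1)]
        have h3 := Real.exp_le_exp.mpr this
        nlinarith [Real.exp_pos (-(w + 1) * s)]
    have htanh := myTanh_key (s * x s)
    nlinarith [htanh, hexp]
  -- monotonicity of x - G
  have hDmono : MonotoneOn (fun s => x s - G s) (Set.Icc (0 : ℝ) 1) := by
    apply myMonoAux _ (fun s => ((w + 1) - w * Real.tanh (s * x s))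
      - ((2 * w + 1) - 2 * w * Real.exp (-(w + 1) * s) - 2 * w * Real.exp ((w + 1) * s - (w + 1))))
    · intro s hs
      exact (hode s hs).sub (hG s)
    · exact hDer
  have hfinal := hDmono h01 h11 zero_le_one
  simp only [hGdef] at hfinal
  -- evaluate G at 0 and 1
  have hE0 : Real.exp (-(w + 1) * (0:ℝ)) = 1 := by norm_num
  have hE1' : Real.exp ((w + 1) * (0:ℝ) - (w + 1)) = Real.exp (-(w + 1)) := by norm_num
  have hE2 : Real.exp (-(w + 1) * (1:ℝ)) = Real.exp (-(w + 1)) := by norm_num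
  have hE3 : Real.exp ((w + 1) * (1:ℝ) - (w + 1)) = 1 := by norm_num
  rw [hE0, hE1', hE2, hE3] at hfinal
  -- bound the q := 2w/(w+1) and E := exp(-(w+1)) terms
  have hq : 2 * w / (w + 1) ≤ 2 := by rw [div_le_iff₀ hw1]; nlinarith
  have hq0 : 0 ≤ 2 * w / (w + 1) := by positivity
  have hE : 0 < Real.exp (-(w + 1)) := Real.exp_pos _
  have hE' : Real.exp (-(w + 1)) ≤ 1 := Real.exp_le_one_iff.mpr (by linarith)
  -- from hfinal: x 1 ≥ x 0 + 2w + 1 - 2q(1 - E) ≥ x 0 + 2w - 3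
  have hx1 : x 1 ≥ x 0 + 2 * w - 3 := by nlinarith [hfinal]
  -- log w ≥ 1
  have hlogw : (1 : ℝ) ≤ Real.log w := by
    rw [Real.le_log_iff_exp_le hw0]
    have := Real.exp_one_lt_d9
    linarith
  nlinarith [hinit, hcon, hx1]
end

section
/- Let R ≥ 2, t > 0, and let γ ~ N(2e^{-t}, 1 - e^{-2t}). Then ∫_R^∞ (1/√(2π(1-e^{-2t})))·exp(-(x - 2e^{-t})²/(2(1-e^{-2t})))·((e^{-2t}/(1-e^{-2t}))·x + 2e^{-t})² dx ≤ C·R·exp(-R²/2)/(1-e^{-2t})² for some absolute constant C. -/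
open Real MeasureTheory Set Filter

set_option maxHeartbeats 1000000

/-- Shift a set integral on `Ioi R` to `Ioi 0`. -/
lemma aux_shift (R : ℝ) (h : ℝ → ℝ) :
    ∫ x in Set.Ioi R, h x = ∫ y in Set.Ioi (0 : ℝ), h (y + R) := by
  have hemb : MeasurableEmbedding (fun x : ℝ => x + R) :=
    (MeasurableEquiv.addRight R).measurableEmbedding
  have key := (measurePreserving_add_right (volume : Measure ℝ) R).setIntegral_preimage_emb
    hemb h (Set.Ioi R)
  have hpre : (fun x : ℝ => x + R) ⁻¹' Set.Ioi R = Set.Ioi (0 : ℝ) := by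
    ext x
    simp
  rw [hpre] at key
  exact key.symm

lemma aux_int_exp (s m : ℝ) (hs : 0 < s) :
    Integrable (fun x : ℝ => Real.exp (-(x - m) ^ 2 / (2 * s))) := by
  have hfun : (fun x : ℝ => Real.exp (-(x - m) ^ 2 / (2 * s)))
      = fun x : ℝ => Real.exp (-(1 / (2 * s)) * (x - m) ^ 2) := by
    funext x
    congr 1
    ring
  rw [hfun]
  exact (integrable_exp_neg_mul_sq (by positivity)).comp_sub_right m

lemma aux_int_sq0 (b : ℝ) (hb : 0 < b) :
    Integrable (fun x : ℝ => x ^ 2 * Real.exp (-b * x ^ 2)) := by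
  apply Integrable.mono' ((integrable_exp_neg_mul_sq (half_pos hb)).const_mul (2 / b))
  · exact ((measurable_id.pow_const 2).mul
      (((measurable_id.pow_const 2).const_mul (-b)).exp)).aestronglyMeasurable
  · refine Filter.Eventually.of_forall fun x => ?_
    rw [Real.norm_eq_abs, abs_of_nonneg (by positivity)]
    have h0 : b / 2 * x ^ 2 ≤ Real.exp (b / 2 * x ^ 2) := by
      have := Real.add_one_le_exp (b / 2 * x ^ 2); linarith
    have h1 : x ^ 2 ≤ 2 / b * Real.exp (b / 2 * x ^ 2) := by
      have h2 := mul_le_mul_of_nonneg_left h0 (by positivity : (0:ℝ) ≤ 2 / b)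
      have heq : 2 / b * (b / 2 * x ^ 2) = x ^ 2 := by field_simp
      linarith
    calc x ^ 2 * Real.exp (-b * x ^ 2)
        ≤ 2 / b * Real.exp (b / 2 * x ^ 2) * Real.exp (-b * x ^ 2) :=
          mul_le_mul_of_nonneg_right h1 (Real.exp_pos _).le
      _ = 2 / b * Real.exp (-(b / 2) * x ^ 2) := by
          rw [mul_assoc, ← Real.exp_add]
          congr 2
          ring

lemma aux_int_sq (s m : ℝ) (hs : 0 < s) :
    Integrable (fun x : ℝ => (x - m) ^ 2 * Real.exp (-(x - m) ^ 2 / (2 * s))) := by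
  have hfun : (fun x : ℝ => (x - m) ^ 2 * Real.exp (-(x - m) ^ 2 / (2 * s)))
      = fun x : ℝ => (x - m) ^ 2 * Real.exp (-(1 / (2 * s)) * (x - m) ^ 2) := by
    funext x
    rw [show -(1 / (2 * s)) * (x - m) ^ 2 = -(x - m) ^ 2 / (2 * s) by ring]
  rw [hfun]
  exact (aux_int_sq0 (1 / (2 * s)) (by positivity)).comp_sub_right m

/-- Gaussian tail bound for the plain exponential. -/
lemma aux_tail_exp (s m R : ℝ) (hs : 0 < s) (hm : m < R) :
    ∫ x in Set.Ioi R, Real.exp (-(x - m) ^ 2 / (2 * s))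
      ≤ Real.exp (-(R - m) ^ 2 / (2 * s)) * Real.sqrt (2 * π * s) / 2 := by
  have hint : Integrable (fun x : ℝ => Real.exp (-(x - R) ^ 2 / (2 * s))) := aux_int_exp s R hs
  have hstep : ∫ x in Set.Ioi R, Real.exp (-(x - m) ^ 2 / (2 * s))
      ≤ ∫ x in Set.Ioi R,
          Real.exp (-(R - m) ^ 2 / (2 * s)) * Real.exp (-(x - R) ^ 2 / (2 * s)) := by
    apply integral_mono_of_nonneg
    · exact Filter.Eventually.of_forall fun x => (Real.exp_pos _).le
    · exact (hint.const_mul _).restrict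
    · rw [Filter.EventuallyLE, ae_restrict_iff' measurableSet_Ioi]
      refine Filter.Eventually.of_forall fun x hx => ?_
      have hx' : R < x := Set.mem_Ioi.mp hx
      rw [← Real.exp_add]
      apply Real.exp_le_exp.2
      rw [← add_div, div_le_div_iff₀ (by positivity) (by positivity)]
      nlinarith [mul_nonneg (sub_nonneg.2 hx'.le) (sub_nonneg.2 hm.le)]
  have harg : π / (1 / (2 * s)) = 2 * π * s := by
    field_simp
  have hval : ∫ x in Set.Ioi R, Real.exp (-(x - R) ^ 2 / (2 * s))
      = Real.sqrt (2 * π * s) / 2 := by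
    rw [aux_shift R (fun x => Real.exp (-(x - R) ^ 2 / (2 * s)))]
    have hfun : ∀ y : ℝ, Real.exp (-(y + R - R) ^ 2 / (2 * s))
        = Real.exp (-(1 / (2 * s)) * y ^ 2) := by
      intro y; congr 1; ring
    simp_rw [hfun]
    rw [integral_gaussian_Ioi, harg]
  calc ∫ x in Set.Ioi R, Real.exp (-(x - m) ^ 2 / (2 * s))
      ≤ ∫ x in Set.Ioi R,
          Real.exp (-(R - m) ^ 2 / (2 * s)) * Real.exp (-(x - R) ^ 2 / (2 * s)) := hstep
    _ = Real.exp (-(R - m) ^ 2 / (2 * s)) * (Real.sqrt (2 * π * s) / 2) := by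
        rw [integral_const_mul, hval]
    _ = Real.exp (-(R - m) ^ 2 / (2 * s)) * Real.sqrt (2 * π * s) / 2 := by ring

/-- Exact value of the truncated second moment, in terms of the truncated zeroth moment. -/
lemma aux_tail_sq (s m R : ℝ) (hs : 0 < s) :
    ∫ x in Set.Ioi R, (x - m) ^ 2 * Real.exp (-(x - m) ^ 2 / (2 * s))
      = s * (R - m) * Real.exp (-(R - m) ^ 2 / (2 * s))
        + s * ∫ x in Set.Ioi R, Real.exp (-(x - m) ^ 2 / (2 * s)) := by
  set F : ℝ → ℝ := fun x => -s * ((x - m) * Real.exp (-(x - m) ^ 2 / (2 * s))) with hF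
  have hd : ∀ x : ℝ, HasDerivAt F
      (((x - m) ^ 2 - s) * Real.exp (-(x - m) ^ 2 / (2 * s))) x := by
    intro x
    have h1 : HasDerivAt (fun x : ℝ => x - m) 1 x := (hasDerivAt_id x).sub_const m
    have h2 : HasDerivAt (fun x : ℝ => -(x - m) ^ 2 / (2 * s))
        (-(2 * (x - m) ^ 1 * 1) / (2 * s)) x := ((h1.pow 2).neg).div_const (2 * s)
    have h3 := h2.exp
    have h4 := h1.mul h3
    have h5 := h4.const_mul (-s)
    refine h5.congr_deriv ?_
    field_simp
    ring
  have htend : Tendsto F atTop (nhds 0) := by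
    have hlo := rpow_mul_exp_neg_mul_sq_isLittleO_exp_neg
      (b := 1 / (2 * s)) (by positivity) 1
    simp only [Real.rpow_one] at hlo
    have hex : Tendsto (fun x : ℝ => Real.exp (-(1 / 2) * x)) atTop (nhds 0) := by
      have h1 : Tendsto (fun x : ℝ => (1 / 2 : ℝ) * x) atTop atTop :=
        Filter.Tendsto.const_mul_atTop (by norm_num) tendsto_id
      have h2 := Real.tendsto_exp_neg_atTop_nhds_zero.comp h1
      refine h2.congr fun x => ?_
      simp only [Function.comp]
      congr 1
      ring
    have h0 : Tendsto (fun y : ℝ => y * Real.exp (-(1 / (2 * s)) * y ^ 2))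
        atTop (nhds 0) := hlo.trans_tendsto hex
    have h0' : Tendsto (fun y : ℝ => y * Real.exp (-y ^ 2 / (2 * s))) atTop (nhds 0) := by
      refine h0.congr fun y => ?_
      rw [show -(1 / (2 * s)) * y ^ 2 = -y ^ 2 / (2 * s) by ring]
    have hsub : Tendsto (fun x : ℝ => x - m) atTop atTop := by
      simpa [sub_eq_add_neg] using tendsto_atTop_add_const_right atTop (-m) tendsto_id
    have hcomp := h0'.comp hsub
    have hfin : Tendsto F atTop (nhds (-s * 0)) := Tendsto.const_mul (-s) hcomp
    simpa using hfin
  have hint : IntegrableOn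
      (fun x : ℝ => ((x - m) ^ 2 - s) * Real.exp (-(x - m) ^ 2 / (2 * s)))
      (Set.Ioi R) := by
    have h := (aux_int_sq s m hs).sub ((aux_int_exp s m hs).const_mul s)
    refine (h.congr (Filter.Eventually.of_forall fun x => ?_)).integrableOn
    simp only [Pi.sub_apply]
    ring
  have hFTC := integral_Ioi_of_hasDerivAt_of_tendsto' (a := R)
    (fun x _ => hd x) hint htend
  have hFR : (0 : ℝ) - F R = s * (R - m) * Real.exp (-(R - m) ^ 2 / (2 * s)) := by
    simp only [hF]
    ring
  rw [hFR] at hFTC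
  have hsplit : ∫ x in Set.Ioi R,
      ((x - m) ^ 2 - s) * Real.exp (-(x - m) ^ 2 / (2 * s))
      = (∫ x in Set.Ioi R, (x - m) ^ 2 * Real.exp (-(x - m) ^ 2 / (2 * s)))
        - s * ∫ x in Set.Ioi R, Real.exp (-(x - m) ^ 2 / (2 * s)) := by
    rw [← integral_const_mul, ← integral_sub (aux_int_sq s m hs).restrict
      ((aux_int_exp s m hs).const_mul s).restrict]
    congr 1
    funext x
    ring
  rw [hsplit] at hFTC
  linarith

/-- Score-estimation error tail bound: there is an absolute constant `C` such that for all
`R ≥ 2` and `t > 0`,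
`∫_R^∞ φ(x; 2e^{-t}, 1-e^{-2t}) ((e^{-2t}/(1-e^{-2t})) x + 2e^{-t})² dx
  ≤ C R e^{-R²/2}/(1-e^{-2t})²`. -/
theorem stmt_16 :
    ∃ C : ℝ, 0 < C ∧ ∀ R t : ℝ, 2 ≤ R → 0 < t →
      (∫ x in Set.Ioi R,
          (1 / Real.sqrt (2 * π * (1 - Real.exp (-2 * t))))
            * Real.exp (-(x - 2 * Real.exp (-t)) ^ 2 / (2 * (1 - Real.exp (-2 * t))))
            * ((Real.exp (-2 * t) / (1 - Real.exp (-2 * t))) * x + 2 * Real.exp (-t)) ^ 2)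
        ≤ C * R * Real.exp (-R ^ 2 / 2) / (1 - Real.exp (-2 * t)) ^ 2 := by
  refine ⟨104, by norm_num, fun R t hR ht => ?_⟩
  have hc1 : Real.exp (-t) < 1 := Real.exp_lt_one_iff.2 (by linarith)
  have hc0 : 0 < Real.exp (-t) := Real.exp_pos _
  have hc2 : Real.exp (-2 * t) = Real.exp (-t) ^ 2 := by
    rw [show (-2 : ℝ) * t = -t + -t by ring, Real.exp_add]; ring
  set c : ℝ := Real.exp (-t) with hc
  set s : ℝ := 1 - Real.exp (-2 * t) with hsdef
  set m : ℝ := 2 * c with hmdef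
  have hsc : s = 1 - c ^ 2 := by rw [hsdef, hc2]
  have hs0 : 0 < s := by rw [hsc]; nlinarith
  have hs1 : s ≤ 1 := by rw [hsc]; nlinarith
  have hmR : m < R := by rw [hmdef]; nlinarith
  set W : ℝ := Real.sqrt (2 * π * s) with hWdef
  have hW0 : 0 < W := Real.sqrt_pos.2 (by positivity)
  have hsqs : Real.sqrt s * Real.sqrt s = s := Real.mul_self_sqrt hs0.le
  have hsqs1 : Real.sqrt s ≤ 1 := by
    rw [show (1 : ℝ) = Real.sqrt 1 by simp]
    exact Real.sqrt_le_sqrt hs1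
  have hW2s : 2 * s ≤ W := by
    have h4 : Real.sqrt (4 * s) ≤ W := by
      apply Real.sqrt_le_sqrt
      nlinarith [Real.pi_gt_three]
    have h4' : Real.sqrt (4 * s) = 2 * Real.sqrt s := by
      rw [show (4 : ℝ) * s = (2 * Real.sqrt s) ^ 2 by nlinarith]
      exact Real.sqrt_sq (by positivity)
    have hss : s ≤ Real.sqrt s := by nlinarith [Real.sqrt_nonneg s]
    nlinarith
  set E : ℝ := Real.exp (-(R - m) ^ 2 / (2 * s)) with hEdef
  have hE0 : 0 < E := Real.exp_pos _
  set K : ℝ := 1 / (W * s ^ 2) with hKdef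
  have hK0 : 0 < K := by positivity
  set B : ℝ := ∫ x in Set.Ioi R, Real.exp (-(x - m) ^ 2 / (2 * s)) with hBdef
  set A : ℝ := ∫ x in Set.Ioi R, (x - m) ^ 2 * Real.exp (-(x - m) ^ 2 / (2 * s)) with hAdef
  have hB0 : 0 ≤ B := by
    rw [hBdef]
    apply integral_nonneg
    intro x
    exact (Real.exp_pos _).le
  have hBle : B ≤ E * W / 2 := aux_tail_exp s m R hs0 hmR
  have hAval : A = s * (R - m) * E + s * B := aux_tail_sq s m R hs0
  -- step 1: pointwise domination
  have hmono : (∫ x in Set.Ioi R,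
          (1 / W)
            * Real.exp (-(x - m) ^ 2 / (2 * s))
            * ((Real.exp (-2 * t) / s) * x + m) ^ 2)
      ≤ ∫ x in Set.Ioi R,
          K * (8 * ((x - m) ^ 2 * Real.exp (-(x - m) ^ 2 / (2 * s)))
            + 32 * Real.exp (-(x - m) ^ 2 / (2 * s))) := by
    apply integral_mono_of_nonneg
    · exact Filter.Eventually.of_forall fun x => by positivity
    · exact ((((aux_int_sq s m hs0).const_mul 8).add
        ((aux_int_exp s m hs0).const_mul 32)).const_mul K).restrict
    · rw [Filter.EventuallyLE, ae_restrict_iff' measurableSet_Ioi]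
      refine Filter.Eventually.of_forall fun x hx => ?_
      have hx2 : 2 ≤ x := le_of_lt (lt_of_le_of_lt hR (Set.mem_Ioi.mp hx))
      have hm0 : 0 ≤ m := by rw [hmdef]; positivity
      have hm2 : m ≤ 2 := by rw [hmdef]; nlinarith
      have hq1 : 0 ≤ (Real.exp (-2 * t) / s) * x + m := by positivity
      have hq2 : (Real.exp (-2 * t) / s) * x + m ≤ 2 * x / s := by
        rw [← sub_nonneg]
        have key : 2 * x / s - ((Real.exp (-2 * t) / s) * x + m)
            = (2 * x - c ^ 2 * x - m * s) / s := by
          rw [hc2]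
          field_simp
          ring
        rw [key]
        apply div_nonneg _ hs0.le
        nlinarith [mul_nonneg (mul_nonneg hm0 hs0.le) (by norm_num : (0:ℝ) ≤ 1),
          mul_nonneg (sub_nonneg.2 hc1.le) (sub_nonneg.2 hc1.le)]
      have h2xs : 0 ≤ 2 * x / s := by positivity
      have hq3 : ((Real.exp (-2 * t) / s) * x + m) ^ 2 ≤ (2 * x / s) ^ 2 :=
        sq_le_sq' (by linarith) hq2
      have hnum : (2 * x) ^ 2 ≤ 8 * (x - m) ^ 2 + 32 := by
        nlinarith [sq_nonneg (x - 2 * m), sq_nonneg (x - 4),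
          mul_nonneg (sub_nonneg.2 hm2) (by linarith : (0:ℝ) ≤ x)]
      have hq : ((Real.exp (-2 * t) / s) * x + m) ^ 2
          ≤ (8 * (x - m) ^ 2 + 32) / s ^ 2 := by
        refine hq3.trans ?_
        rw [div_pow, div_le_div_iff₀ (by positivity) (by positivity)]
        nlinarith [mul_le_mul_of_nonneg_right hnum (sq_nonneg s)]
      have hden : 0 ≤ 1 / W * Real.exp (-(x - m) ^ 2 / (2 * s)) := by positivity
      calc (1 / W) * Real.exp (-(x - m) ^ 2 / (2 * s))
            * ((Real.exp (-2 * t) / s) * x + m) ^ 2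
          = (1 / W * Real.exp (-(x - m) ^ 2 / (2 * s)))
            * ((Real.exp (-2 * t) / s) * x + m) ^ 2 := by ring
        _ ≤ (1 / W * Real.exp (-(x - m) ^ 2 / (2 * s)))
            * ((8 * (x - m) ^ 2 + 32) / s ^ 2) := mul_le_mul_of_nonneg_left hq hden
        _ = K * (8 * ((x - m) ^ 2 * Real.exp (-(x - m) ^ 2 / (2 * s)))
            + 32 * Real.exp (-(x - m) ^ 2 / (2 * s))) := by
            rw [hKdef]
            field_simp
  -- step 2: compute the dominating integral
  have hsplit : (∫ x in Set.Ioi R,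
        K * (8 * ((x - m) ^ 2 * Real.exp (-(x - m) ^ 2 / (2 * s)))
          + 32 * Real.exp (-(x - m) ^ 2 / (2 * s))))
      = K * (8 * A + 32 * B) := by
    rw [integral_const_mul, integral_add (((aux_int_sq s m hs0).const_mul 8).restrict)
      (((aux_int_exp s m hs0).const_mul 32).restrict), integral_const_mul, integral_const_mul]
  -- step 3: numeric bound
  have hbound : K * (8 * A + 32 * B) ≤ 14 * R * E / s ^ 2 := by
    have hRm : R - m ≤ R := by rw [hmdef]; nlinarith
    have h1 : 8 * A + 32 * B ≤ 8 * s * R * E + 20 * E * W := by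
      rw [hAval]
      nlinarith [mul_nonneg (mul_nonneg hs0.le hE0.le) (sub_nonneg.2 hRm)]
    have haux : 8 * s * R + 20 * W ≤ 14 * R * W := by
      nlinarith [mul_nonneg (sub_nonneg.2 hW2s) (by linarith : (0:ℝ) ≤ R),
        mul_nonneg hW0.le (by linarith : (0:ℝ) ≤ R - 2)]
    have h2 : 8 * s * R * E + 20 * E * W ≤ 14 * R * W * E := by
      nlinarith [mul_le_mul_of_nonneg_right haux hE0.le]
    have h3 : K * (8 * A + 32 * B) ≤ K * (14 * R * W * E) :=
      mul_le_mul_of_nonneg_left (by linarith) hK0.le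
    have h4 : K * (14 * R * W * E) = 14 * R * E / s ^ 2 := by
      rw [hKdef]
      field_simp
    linarith
  -- step 4: E ≤ e^2 exp(-R^2/2)
  have hEexp : E ≤ Real.exp 2 * Real.exp (-R ^ 2 / 2) := by
    rw [hEdef, ← Real.exp_add]
    apply Real.exp_le_exp.2
    rw [div_le_iff₀ (by positivity)]
    rw [hsc, hmdef]
    nlinarith [sq_nonneg (R * c - 2)]
  have hexp2 : Real.exp 2 ≤ 7.39 := by
    rw [show (2 : ℝ) = 1 + 1 by norm_num, Real.exp_add]
    nlinarith [Real.exp_one_lt_d9, Real.exp_pos 1]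
  have hfinal : 14 * R * E / s ^ 2 ≤ 104 * R * Real.exp (-R ^ 2 / 2) / s ^ 2 := by
    have hE2 : E ≤ 7.39 * Real.exp (-R ^ 2 / 2) := by
      refine hEexp.trans ?_
      have := Real.exp_pos (-R ^ 2 / 2)
      nlinarith
    have hnum : 14 * R * E ≤ 104 * R * Real.exp (-R ^ 2 / 2) := by
      nlinarith [mul_le_mul_of_nonneg_left hE2 (show (0:ℝ) ≤ 14 * R by linarith),
        Real.exp_pos (-R ^ 2 / 2)]
    rw [div_le_div_iff₀ (by positivity) (by positivity)]
    calc 14 * R * E * s ^ 2 = 14 * R * E * s ^ 2 := rfl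
      _ ≤ 104 * R * Real.exp (-R ^ 2 / 2) * s ^ 2 :=
          mul_le_mul_of_nonneg_right hnum (sq_nonneg s)
  calc (∫ x in Set.Ioi R,
          (1 / W)
            * Real.exp (-(x - m) ^ 2 / (2 * s))
            * ((Real.exp (-2 * t) / s) * x + m) ^ 2)
      ≤ K * (8 * A + 32 * B) := by rw [← hsplit]; exact hmono
    _ ≤ 14 * R * E / s ^ 2 := hbound
    _ ≤ 104 * R * Real.exp (-R ^ 2 / 2) / s ^ 2 := hfinal
end

section
/- Let 0 < α₁ ≤ α₂ with α₂² ≤ ln(w)/4, let β ≥ 1, w ≥ 1, and let s = a ∈ (0, 1/√2] with b² = 1 - a². Suppose p¹, p⁻¹ are densities supported on (α₁,α₂) and (-α₂,-α₁) with β-bounded ratio (i.e., p⁻¹(x₁)/p¹(x₂) ∈ [1/β, β] for all valid x₁, x₂). Then for any y ≤ ln(w)/(16α₂), the posterior probability of the negative class under Gaussian smoothing satisfies P(z = -1 | X = y) ≥ 1/(2β√w), where X = a·X₀ + b·ξ, X₀ ~ (1/2)p¹ + (1/2)p⁻¹, ξ ~ N(0,1). -/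
open MeasureTheory

set_option maxHeartbeats 1000000 in
/-- Lower bound on the posterior of the negative class under Gaussian smoothing:
for a mixture of `β`-bounded densities `p¹, p⁻¹` supported on `(α₁,α₂)` and `(-α₂,-α₁)`,
with `α₂² ≤ (ln w)/4`, `β ≥ 1`, `w ≥ 1`, smoothing parameters `a² ≤ 1/2`, `b² = 1-a²`,
and any `y ≤ ln(w)/(16α₂)`, one has `P(z = -1 | X = y) ≥ 1/(2β√w)`. -/
theorem stmt_19 (α₁ α₂ β w a b y : ℝ) (p1 pm : ℝ → ℝ)
    (hα₁ : 0 < α₁) (hα₁₂ : α₁ ≤ α₂) (hα₂ : α₂ ^ 2 ≤ Real.log w / 4)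
    (hβ : 1 ≤ β) (hw : 1 ≤ w)
    (ha : 0 < a) (ha2 : a ^ 2 ≤ 1 / 2) (hb : 0 < b) (hab : a ^ 2 + b ^ 2 = 1)
    (hmeas1 : Measurable p1) (hmeasm : Measurable pm)
    (hnn1 : ∀ u, 0 ≤ p1 u) (hnnm : ∀ u, 0 ≤ pm u)
    (hsupp1 : ∀ u ∉ Set.Ioo α₁ α₂, p1 u = 0)
    (hsuppm : ∀ u ∉ Set.Ioo (-α₂) (-α₁), pm u = 0)
    (hint1 : ∫ u, p1 u = 1) (hintm : ∫ u, pm u = 1)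
    (hratio : ∀ x₁ ∈ Set.Ioo (-α₂) (-α₁), ∀ x₂ ∈ Set.Ioo α₁ α₂,
      p1 x₂ ≤ β * pm x₁ ∧ pm x₁ ≤ β * p1 x₂)
    (hy : y ≤ Real.log w / (16 * α₂)) :
    (∫ u in Set.Ioo (-α₂) (-α₁), pm u * Real.exp (-(y - a * u) ^ 2 / (2 * b ^ 2)))
        / ((∫ u in Set.Ioo (-α₂) (-α₁), pm u * Real.exp (-(y - a * u) ^ 2 / (2 * b ^ 2)))
            + (∫ u in Set.Ioo α₁ α₂, p1 u * Real.exp (-(y - a * u) ^ 2 / (2 * b ^ 2))))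
      ≥ 1 / (2 * β * Real.sqrt w) := by
  have hw0 : (0:ℝ) < w := lt_of_lt_of_le one_pos hw
  have hlogw : 0 ≤ Real.log w := Real.log_nonneg hw
  have hsw : 1 ≤ Real.sqrt w := by
    rw [show (1:ℝ) = Real.sqrt 1 by simp]; exact Real.sqrt_le_sqrt hw
  have hsw0 : 0 < Real.sqrt w := lt_of_lt_of_le one_pos hsw
  have hα₂0 : 0 < α₂ := lt_of_lt_of_le hα₁ hα₁₂
  have ha1 : a ≤ 1 := by nlinarith
  have hb2 : (1:ℝ)/2 ≤ b ^ 2 := by nlinarith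
  have h2b : (0:ℝ) < 2 * b ^ 2 := by positivity
  set E : ℝ → ℝ := fun u => Real.exp (-(y - a * u) ^ 2 / (2 * b ^ 2)) with hEdef
  have hEpos : ∀ u, 0 < E u := fun u => Real.exp_pos _
  have hEle1 : ∀ u, E u ≤ 1 := by
    intro u
    rw [show (1:ℝ) = Real.exp 0 by simp]
    apply Real.exp_le_exp.2
    apply div_nonpos_of_nonpos_of_nonneg (neg_nonpos_of_nonneg (sq_nonneg _)) h2b.le
  have hEcont : Continuous E := by fun_prop
  -- key pointwise bound
  have hkey : ∀ x₁ ∈ Set.Ioo (-α₂) (-α₁), ∀ x₂ ∈ Set.Ioo α₁ α₂,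
      E x₂ ≤ Real.sqrt w * E x₁ := by
    intro x₁ hx₁ x₂ hx₂
    obtain ⟨h11, h12⟩ := hx₁
    obtain ⟨h21, h22⟩ := hx₂
    have hx1sq : x₁ ^ 2 ≤ α₂ ^ 2 := by nlinarith
    have hd : 0 < x₂ - x₁ := by linarith
    have hax : a * (x₂ - x₁) ≤ 2 * α₂ := by nlinarith [mul_nonneg (sub_nonneg.2 ha1) hd.le]
    have ht1 : 2 * a * y * (x₂ - x₁) ≤ Real.log w / 4 := by
      rcases le_or_gt 0 y with hy0 | hy0
      · have h5 : y * (16 * α₂) ≤ Real.log w := by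
          rw [← le_div_iff₀ (by positivity)]; exact hy
        have h6 : (2 * y) * (a * (x₂ - x₁)) ≤ (2 * y) * (2 * α₂) :=
          mul_le_mul_of_nonneg_left hax (by linarith)
        linarith
      · have h7 : y * (a * (x₂ - x₁)) ≤ 0 :=
          mul_nonpos_of_nonpos_of_nonneg hy0.le (mul_nonneg ha.le hd.le)
        linarith
    have ht2 : a ^ 2 * (x₁ ^ 2 - x₂ ^ 2) ≤ Real.log w / 8 := by
      nlinarith [sq_nonneg x₂, sq_nonneg a]
    have hdiff : (y - a * x₁) ^ 2 - (y - a * x₂) ^ 2 ≤ b ^ 2 * Real.log w := by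
      have heq : (y - a * x₁) ^ 2 - (y - a * x₂) ^ 2
          = 2 * a * y * (x₂ - x₁) + a ^ 2 * (x₁ ^ 2 - x₂ ^ 2) := by ring
      have hbl : Real.log w / 4 + Real.log w / 8 ≤ b ^ 2 * Real.log w := by
        have h8 := mul_le_mul_of_nonneg_right hb2 hlogw
        linarith
      linarith
    have hsplit : E x₂ = Real.exp (((y - a * x₁) ^ 2 - (y - a * x₂) ^ 2) / (2 * b ^ 2)) * E x₁ := by
      rw [hEdef]
      simp only
      rw [← Real.exp_add]
      congr 1
      field_simp
      ring
    rw [hsplit]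
    have hsq : Real.sqrt w = Real.exp (Real.log w / 2) := by
      rw [← Real.log_sqrt hw0.le, Real.exp_log hsw0]
    have hexp : Real.exp (((y - a * x₁) ^ 2 - (y - a * x₂) ^ 2) / (2 * b ^ 2)) ≤ Real.sqrt w := by
      rw [hsq]
      apply Real.exp_le_exp.2
      rw [div_le_iff₀ h2b]
      nlinarith
    exact mul_le_mul_of_nonneg_right hexp (hEpos x₁).le
  -- integrability
  have hip1 : Integrable p1 := by
    by_contra h
    rw [integral_undef h] at hint1; norm_num at hint1
  have hipm : Integrable pm := by
    by_contra h
    rw [integral_undef h] at hintm; norm_num at hintm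
  have hiE1 : Integrable (fun u => p1 u * E u) := by
    have := hip1.bdd_mul hEcont.aestronglyMeasurable
      (Filter.Eventually.of_forall (fun u => by rw [Real.norm_eq_abs, abs_of_pos (hEpos u)]; exact hEle1 u))
    simpa [mul_comm] using this
  have hiEm : Integrable (fun u => pm u * E u) := by
    have := hipm.bdd_mul hEcont.aestronglyMeasurable
      (Filter.Eventually.of_forall (fun u => by rw [Real.norm_eq_abs, abs_of_pos (hEpos u)]; exact hEle1 u))
    simpa [mul_comm] using this
  -- set integrals of the densities are 1
  have hp1set : ∫ u in Set.Ioo α₁ α₂, p1 u = 1 := by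
    rw [setIntegral_eq_integral_of_forall_compl_eq_zero (fun u hu => hsupp1 u hu)]
    exact hint1
  have hpmset : ∫ u in Set.Ioo (-α₂) (-α₁), pm u = 1 := by
    rw [setIntegral_eq_integral_of_forall_compl_eq_zero (fun u hu => hsuppm u hu)]
    exact hintm
  set I1 : ℝ := ∫ u in Set.Ioo α₁ α₂, p1 u * E u with hI1def
  set Im : ℝ := ∫ u in Set.Ioo (-α₂) (-α₁), pm u * E u with hImdef
  have hI1nn : 0 ≤ I1 :=
    setIntegral_nonneg measurableSet_Ioo (fun u _ => mul_nonneg (hnn1 u) (hEpos u).le)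
  -- I1 ≤ √w * E x₁ for every x₁ in the negative interval
  have hI1le : ∀ x₁ ∈ Set.Ioo (-α₂) (-α₁), I1 ≤ Real.sqrt w * E x₁ := by
    intro x₁ hx₁
    have hmono : I1 ≤ ∫ u in Set.Ioo α₁ α₂, p1 u * (Real.sqrt w * E x₁) := by
      apply setIntegral_mono_on hiE1.integrableOn
        ((hip1.mul_const _).integrableOn) measurableSet_Ioo
      intro u hu
      exact mul_le_mul_of_nonneg_left (hkey x₁ hx₁ u hu) (hnn1 u)
    calc I1 ≤ ∫ u in Set.Ioo α₁ α₂, p1 u * (Real.sqrt w * E x₁) := hmono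
      _ = (∫ u in Set.Ioo α₁ α₂, p1 u) * (Real.sqrt w * E x₁) := integral_mul_const _ _
      _ = Real.sqrt w * E x₁ := by rw [hp1set]; ring
  -- Im ≥ I1 / √w
  have hImge : I1 / Real.sqrt w ≤ Im := by
    have hmono : (∫ u in Set.Ioo (-α₂) (-α₁), pm u * (I1 / Real.sqrt w)) ≤ Im := by
      apply setIntegral_mono_on ((hipm.mul_const _).integrableOn)
        hiEm.integrableOn measurableSet_Ioo
      intro u hu
      apply mul_le_mul_of_nonneg_left _ (hnnm u)
      rw [div_le_iff₀ hsw0]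
      have := hI1le u hu
      linarith [hI1le u hu]
    calc I1 / Real.sqrt w
        = (∫ u in Set.Ioo (-α₂) (-α₁), pm u) * (I1 / Real.sqrt w) := by rw [hpmset]; ring
      _ = ∫ u in Set.Ioo (-α₂) (-α₁), pm u * (I1 / Real.sqrt w) := (integral_mul_const _ _).symm
      _ ≤ Im := hmono
  -- Im > 0
  have hImpos : 0 < Im := by
    set c : ℝ := Real.exp (-(|y| + α₂) ^ 2 / (2 * b ^ 2)) with hcdef
    have hc : 0 < c := Real.exp_pos _
    have hEc : ∀ u ∈ Set.Ioo (-α₂) (-α₁), c ≤ E u := by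
      intro u hu
      obtain ⟨hu1, hu2⟩ := hu
      have hau1 : -α₂ ≤ a * u := by nlinarith
      have hau2 : a * u ≤ 0 := by nlinarith
      have hsq : (y - a * u) ^ 2 ≤ (|y| + α₂) ^ 2 := by
        nlinarith [le_abs_self y, neg_abs_le y, abs_nonneg y,
          mul_le_mul_of_nonneg_right (le_abs_self y) (show (0:ℝ) ≤ -(a*u) by linarith),
          mul_le_mul_of_nonneg_left (show -(a*u) ≤ α₂ by linarith) (abs_nonneg y)]
      apply Real.exp_le_exp.2
      rw [div_le_div_iff_of_pos_right h2b]
      linarith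
    have hmono : (∫ u in Set.Ioo (-α₂) (-α₁), pm u * c) ≤ Im := by
      apply setIntegral_mono_on ((hipm.mul_const _).integrableOn)
        hiEm.integrableOn measurableSet_Ioo
      intro u hu
      exact mul_le_mul_of_nonneg_left (hEc u hu) (hnnm u)
    have : (∫ u in Set.Ioo (-α₂) (-α₁), pm u * c) = c := by
      rw [integral_mul_const, hpmset, one_mul]
    linarith [this ▸ hmono, hc]
  -- conclude
  have hI1sw : I1 ≤ Real.sqrt w * Im := by
    rw [div_le_iff₀ hsw0] at hImge
    linarith
  have hden : 0 < Im + I1 := by linarith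
  rw [ge_iff_le, div_le_div_iff₀ (by positivity) hden]
  have hβs : 1 * Real.sqrt w ≤ β * Real.sqrt w :=
    mul_le_mul_of_nonneg_right hβ hsw0.le
  nlinarith [mul_le_mul_of_nonneg_right hβ hsw0.le,
    mul_le_mul_of_nonneg_left hI1sw (show (0:ℝ) ≤ 2*β by linarith),
    mul_pos hImpos hsw0, mul_le_mul_of_nonneg_right hβ (mul_nonneg hsw0.le hImpos.le)]
end
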